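/- Let H be a Hopf *-algebra and A a *-algebra with a left H-*-action. Then the set GL(H,A) of linear maps â: H → A satisfying â(1_H) = 1_A, â(gh) = â(g₍₁₎)(g₍₂₎ ▷ â(h)), and (g₍₁₎ ▷ b)â(g₍₂₎) = â(g₍₁₎)(g₍₂₎ ▷ b) for all g,h ∈ H and b ∈ A, is a group under the convolution product (â * b̂)(g) = â(g₍₁₎)b̂(g₍₂₎), with unit ê(g) = ε(g)1_A. -/

import Mathlib

variable {C : Type*} [CommRing C] [StarRing C]
variable {H : Type*} [Ring H] [HopfAlgebra C H] [StarRing H] [StarModule C H]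
variable {A : Type*} [Ring A] [StarRing A] [Algebra C A] [StarModule C A]

open TensorProduct in
/-- `SwRep g g1 g2` states that `Δ(g) = ∑ i, g1 i ⊗ g2 i`, i.e. `(g1, g2)` is a Sweedler
representation of the comultiplication of `g`. -/
def SwRep {C : Type*} [CommRing C] {H : Type*} [Ring H] [HopfAlgebra C H]
    (g : H) {n : ℕ} (g1 g2 : Fin n → H) : Prop :=
  Coalgebra.comul (R := C) g = ∑ i, g1 i ⊗ₜ[C] g2 i

/-- `H` is a Hopf `*`-algebra: comultiplication and counit are `*`-homomorphisms. -/
def IsHopfStar (C H : Type*) [CommRing C] [StarRing C] [Ring H] [HopfAlgebra C H]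
    [StarRing H] [StarModule C H] : Prop :=
  (∀ g : H, Coalgebra.counit (R := C) (star g) = star (Coalgebra.counit (R := C) g)) ∧
  (∀ (g : H) (n : ℕ) (g1 g2 : Fin n → H), SwRep (C := C) g g1 g2 →
      SwRep (C := C) (star g) (fun i => star (g1 i)) (fun i => star (g2 i)))

/-- A left `*`-action of the Hopf `*`-algebra `H` on the `*`-algebra `A`:
`g ▷ (ab) = (g₍₁₎ ▷ a)(g₍₂₎ ▷ b)`, `g ▷ 1 = ε(g)1`, `(g ▷ a)* = S(g)* ▷ a*`. -/
structure StarAction (C H A : Type*) [CommRing C] [StarRing C] [Ring H] [HopfAlgebra C H]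
    [StarRing H] [StarModule C H] [Ring A] [StarRing A] [Algebra C A] [StarModule C A] where
  act : H →ₗ[C] A →ₗ[C] A
  act_one : ∀ a : A, act 1 a = a
  act_mul : ∀ (g h : H) (a : A), act (g * h) a = act g (act h a)
  act_ab : ∀ (g : H) (a b : A) (n : ℕ) (g1 g2 : Fin n → H), SwRep (C := C) g g1 g2 →
      act g (a * b) = ∑ i, act (g1 i) a * act (g2 i) b
  act_unit : ∀ g : H, act g 1 = Coalgebra.counit (R := C) g • (1 : A)
  act_star : ∀ (g : H) (a : A), star (act g a) =
      act (star (HopfAlgebra.antipode (R := C) g)) (star a)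

/-- The convolution product on `Hom_C(H,A)`: `(f * h)(g) = f(g₍₁₎)h(g₍₂₎)`. -/
noncomputable def conv (f h : H →ₗ[C] A) : H →ₗ[C] A :=
  (TensorProduct.lift ((LinearMap.mul C A).compl₁₂ f h)).comp (Coalgebra.comul)

/-- The convolution unit `ê(g) = ε(g)1_A`. -/
noncomputable def convUnit : H →ₗ[C] A := (Algebra.linearMap C A).comp (Coalgebra.counit)

/-- The set `GL(H,A)` of cocycles: `â(1)=1`, `â(gh) = â(g₍₁₎)(g₍₂₎ ▷ â(h))`, and
`(g₍₁₎ ▷ b)â(g₍₂₎) = â(g₍₁₎)(g₍₂₎ ▷ b)`. -/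
def GLset (α : StarAction C H A) : Set (H →ₗ[C] A) :=
  {f | f 1 = 1 ∧
    (∀ (g h : H) (n : ℕ) (g1 g2 : Fin n → H), SwRep (C := C) g g1 g2 →
        f (g * h) = ∑ i, f (g1 i) * α.act (g2 i) (f h)) ∧
    (∀ (g : H) (b : A) (n : ℕ) (g1 g2 : Fin n → H), SwRep (C := C) g g1 g2 →
        ∑ i, α.act (g1 i) b * f (g2 i) = ∑ i, f (g1 i) * α.act (g2 i) b)}

open TensorProduct Coalgebra HopfAlgebra

set_option linter.unusedSectionVars false

namespace GLaux

/-- Bundled representation of `comul a` (the index type is a field). -/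
structure Rep (R : Type*) {A : Type*} [CommSemiring R] [AddCommMonoid A] [Module R A]
    [CoalgebraStruct R A] (a : A) where
  {ι : Type*}
  index : Finset ι
  left : ι → A
  right : ι → A
  eq : ∑ i ∈ index, left i ⊗ₜ[R] right i = CoalgebraStruct.comul a

/-- The unbundled Mathlib representation. -/
def Rep.toC {R : Type*} {A : Type*} [CommSemiring R] [AddCommMonoid A] [Module R A]
    [CoalgebraStruct R A] {a : A} (r : Rep R a) : Coalgebra.Repr R a r.ι :=
  ⟨r.index, r.left, r.right, r.eq⟩

/-- An arbitrarily chosen representation. -/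
noncomputable def Rep.arbitrary (R : Type*) {A : Type*} [CommSemiring R] [AddCommMonoid A]
    [Module R A] [CoalgebraStruct R A] (a : A) : Rep R a :=
  ⟨(Coalgebra.Repr.arbitrary R a).index, (Coalgebra.Repr.arbitrary R a).left,
    (Coalgebra.Repr.arbitrary R a).right, (Coalgebra.Repr.arbitrary R a).eq⟩

lemma Rep.sum_counit_tmul_eq {R : Type*} {A : Type*} [CommSemiring R] [AddCommMonoid A]
    [Module R A] [Coalgebra R A] {a : A} (r : Rep R a) :
    ∑ i ∈ r.index, counit (R := R) (r.left i) ⊗ₜ (r.right i) = 1 ⊗ₜ[R] a :=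
  Coalgebra.sum_counit_tmul_eq r.toC

lemma Rep.sum_tmul_counit_eq {R : Type*} {A : Type*} [CommSemiring R] [AddCommMonoid A]
    [Module R A] [Coalgebra R A] {a : A} (r : Rep R a) :
    ∑ i ∈ r.index, (r.left i) ⊗ₜ counit (R := R) (r.right i) = a ⊗ₜ[R] 1 :=
  Coalgebra.sum_tmul_counit_eq r.toC

lemma Rep.sum_tmul_tmul_eq {R : Type*} {A : Type*} [CommSemiring R] [AddCommMonoid A]
    [Module R A] [Coalgebra R A] {a : A} (r : Rep R a)
    (a₁ : (i : r.ι) → Rep R (r.left i)) (a₂ : (i : r.ι) → Rep R (r.right i)) :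
    ∑ i ∈ r.index, ∑ j ∈ (a₁ i).index,
      (a₁ i).left j ⊗ₜ[R] ((a₁ i).right j ⊗ₜ[R] r.right i)
      = ∑ i ∈ r.index, ∑ j ∈ (a₂ i).index,
      r.left i ⊗ₜ[R] ((a₂ i).left j ⊗ₜ[R] (a₂ i).right j) :=
  Coalgebra.sum_tmul_tmul_eq r.toC (fun i => (a₁ i).toC) (fun i => (a₂ i).toC)

lemma Rep.sum_antipode_mul_eq_smul {R : Type*} {A : Type*} [CommSemiring R] [Semiring A]
    [HopfAlgebra R A] {a : A} (r : Rep R a) :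
    ∑ i ∈ r.index, HopfAlgebra.antipode R (r.left i) * r.right i = counit (R := R) a • 1 :=
  HopfAlgebra.sum_antipode_mul_eq_smul r.toC

lemma Rep.sum_mul_antipode_eq_smul {R : Type*} {A : Type*} [CommSemiring R] [Semiring A]
    [HopfAlgebra R A] {a : A} (r : Rep R a) :
    ∑ i ∈ r.index, r.left i * HopfAlgebra.antipode R (r.right i) = counit (R := R) a • 1 :=
  HopfAlgebra.sum_mul_antipode_eq_smul r.toC

/-- Transfer a finset sum to a `Fin`-indexed sum. -/
lemma sum_fin {ι M : Type*} [AddCommMonoid M] (s : Finset ι) (F : ι → M) :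
    ∑ i ∈ s, F i = ∑ j : Fin s.card, F (s.equivFin.symm j) := by
  rw [← Finset.sum_attach s F, ← Equiv.sum_comp s.equivFin]
  simp

section Reprs

variable (C) in
/-- A `Repr` of `1`. -/
noncomputable def reprOne : Rep C (1 : H) :=
  ⟨(Finset.univ : Finset (Fin 1)), fun _ => 1, fun _ => 1, by
    rw [Bialgebra.comul_one, Algebra.TensorProduct.one_def]; simp⟩

/-- A `Repr` from a Sweedler representation. -/
noncomputable def reprOfSw {g : H} {n : ℕ} {g1 g2 : Fin n → H} (h : SwRep (C := C) g g1 g2) :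
    Rep C g := ⟨(Finset.univ : Finset (Fin n)), g1, g2, h.symm⟩

/-- A Sweedler representation from a `Repr`. -/
lemma swRep_of_repr {g : H} (r : Rep C g) :
    SwRep (C := C) g (fun j => r.left (r.index.equivFin.symm j))
      (fun j => r.right (r.index.equivFin.symm j)) := by
  unfold SwRep
  rw [← r.eq, sum_fin r.index]

/-- A `Repr` of a product, from `Repr`s of the factors. -/
noncomputable def reprMul {g k : H} (rg : Rep C g) (rk : Rep C k) : Rep C (g * k) where
  index := rg.index ×ˢ rk.index
  left := fun p => rg.left p.1 * rk.left p.2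
  right := fun p => rg.right p.1 * rk.right p.2
  eq := by
    rw [Bialgebra.comul_mul, ← rg.eq, ← rk.eq, Finset.sum_mul_sum]
    rw [Finset.sum_product]
    simp [Algebra.TensorProduct.tmul_mul_tmul]

lemma counit_smul_right {g : H} (r : Rep C g) :
    ∑ i ∈ r.index, counit (R := C) (r.left i) • r.right i = g := by
  have h := congrArg (TensorProduct.lid C H) (Rep.sum_counit_tmul_eq (R := C) r)
  rw [map_sum] at h
  simpa only [lid_tmul, one_smul] using h

lemma counit_smul_left {g : H} (r : Rep C g) :
    ∑ i ∈ r.index, counit (R := C) (r.right i) • r.left i = g := by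
  have h := congrArg (TensorProduct.rid C H) (Rep.sum_tmul_counit_eq (R := C) r)
  rw [map_sum] at h
  simpa only [rid_tmul, one_smul] using h

lemma counit_counit {g : H} (r : Rep C g) :
    ∑ i ∈ r.index, Coalgebra.counit (R := C) (r.left i) * Coalgebra.counit (R := C) (r.right i)
      = Coalgebra.counit (R := C) g := by
  have h := congrArg (Coalgebra.counit (R := C)) (counit_smul_right r)
  rw [map_sum] at h
  simpa only [map_smul, smul_eq_mul] using h

end Reprs

section FourLeg

variable {M₁ M₂ : Type*} [AddCommGroup M₁] [Module C M₁] [AddCommGroup M₂] [Module C M₂]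

/-- Canonical reordering map `w ⊗ (x ⊗ (y ⊗ z)) ↦ (β w z) ⊗ (γ x y)`. -/
noncomputable def combine4 (β : H →ₗ[C] H →ₗ[C] M₁) (γ : H →ₗ[C] H →ₗ[C] M₂) :
    H ⊗[C] (H ⊗[C] (H ⊗[C] H)) →ₗ[C] M₁ ⊗[C] M₂ :=
  (TensorProduct.map (TensorProduct.lift β) (TensorProduct.lift γ)) ∘ₗ
    (TensorProduct.tensorTensorTensorComm C H H H H).toLinearMap ∘ₗ
    (TensorProduct.assoc C H H (H ⊗[C] H)).symm.toLinearMap ∘ₗ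
    (LinearMap.lTensor H (LinearMap.lTensor H (TensorProduct.comm C H H).toLinearMap))

@[simp] lemma combine4_tmul (β : H →ₗ[C] H →ₗ[C] M₁) (γ : H →ₗ[C] H →ₗ[C] M₂)
    (w x y z : H) :
    combine4 β γ (w ⊗ₜ (x ⊗ₜ (y ⊗ₜ z))) = (β w z) ⊗ₜ[C] (γ x y) := by
  simp [combine4]

/-- The fundamental "four-leg re-nesting" lemma:
`∑ β(g₍₁₎, g₍₄₎) ⊗ γ(g₍₂₎, g₍₃₎)` computed via the nesting `((12),(34))` equals the same
computed via the nesting `(1,(23),4)`. -/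
lemma four_leg (β : H →ₗ[C] H →ₗ[C] M₁) (γ : H →ₗ[C] H →ₗ[C] M₂) {g : H} (r : Rep C g)
    (RL : ∀ i : r.ι, Rep C (r.left i)) (RR : ∀ i : r.ι, Rep C (r.right i))
    (RU : ∀ (i : r.ι) (n : (RR i).ι), Rep C ((RR i).left n)) :
    ∑ i ∈ r.index, ∑ m ∈ (RL i).index, ∑ n ∈ (RR i).index,
      (β ((RL i).left m) ((RR i).right n)) ⊗ₜ[C] (γ ((RL i).right m) ((RR i).left n))
    = ∑ i ∈ r.index, ∑ n ∈ (RR i).index, ∑ p ∈ (RU i n).index,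
      (β (r.left i) ((RR i).right n)) ⊗ₜ[C] (γ ((RU i n).left p) ((RU i n).right p)) := by
  classical
  set RV : ∀ (i : r.ι) (n : (RR i).ι), Rep C ((RR i).right n) :=
    fun i n => Rep.arbitrary C ((RR i).right n) with hRV
  -- step 1 : rewrite the RHS using coassociativity inside `r.right i`
  have step1 : ∀ i ∈ r.index,
      ∑ n ∈ (RR i).index, ∑ p ∈ (RU i n).index,
        (β (r.left i) ((RR i).right n)) ⊗ₜ[C] (γ ((RU i n).left p) ((RU i n).right p))
      = ∑ n ∈ (RR i).index, ∑ s ∈ (RV i n).index,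
        (β (r.left i) ((RV i n).right s)) ⊗ₜ[C] (γ ((RR i).left n) ((RV i n).left s)) := by
    intro i _
    have base := Rep.sum_tmul_tmul_eq (RR i) (RU i) (RV i)
    have h := congrArg ((combine4 β γ) ∘ₗ (TensorProduct.mk C H _ (r.left i))) base
    simpa only [map_sum, LinearMap.comp_apply, TensorProduct.mk_apply, combine4_tmul] using h
  -- step 2 : the main renesting via coassociativity of `g`
  have base := Rep.sum_tmul_tmul_eq r RL RR
  have h := congrArg ((combine4 β γ) ∘ₗ
    (LinearMap.lTensor H (LinearMap.lTensor H (Coalgebra.comul (R := C))))) base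
  simp only [map_sum, LinearMap.comp_apply, LinearMap.lTensor_tmul] at h
  -- in h, rewrite comul (r.right i) and comul ((RV ..)-stuff)
  calc
    ∑ i ∈ r.index, ∑ m ∈ (RL i).index, ∑ n ∈ (RR i).index,
        (β ((RL i).left m) ((RR i).right n)) ⊗ₜ[C] (γ ((RL i).right m) ((RR i).left n))
        = ∑ i ∈ r.index, ∑ m ∈ (RL i).index,
            (combine4 β γ) (((RL i).left m) ⊗ₜ (((RL i).right m) ⊗ₜ
              Coalgebra.comul (R := C) (r.right i))) := by
          refine Finset.sum_congr rfl fun i _ => Finset.sum_congr rfl fun m _ => ?_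
          rw [← (RR i).eq, tmul_sum, tmul_sum, map_sum]
          simp only [combine4_tmul]
    _ = ∑ i ∈ r.index, ∑ n ∈ (RR i).index,
            (combine4 β γ) ((r.left i) ⊗ₜ (((RR i).left n) ⊗ₜ
              Coalgebra.comul (R := C) ((RR i).right n))) := h
    _ = ∑ i ∈ r.index, ∑ n ∈ (RR i).index, ∑ s ∈ (RV i n).index,
        (β (r.left i) ((RV i n).right s)) ⊗ₜ[C] (γ ((RR i).left n) ((RV i n).left s)) := by
          refine Finset.sum_congr rfl fun i _ => Finset.sum_congr rfl fun n _ => ?_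
          rw [← (RV i n).eq, tmul_sum, tmul_sum, map_sum]
          simp only [combine4_tmul]
    _ = ∑ i ∈ r.index, ∑ n ∈ (RR i).index, ∑ p ∈ (RU i n).index,
        (β (r.left i) ((RR i).right n)) ⊗ₜ[C] (γ ((RU i n).left p) ((RU i n).right p)) := by
          exact (Finset.sum_congr rfl step1).symm

end FourLeg

section Conv

variable {B B' : Type*} [Ring B] [Algebra C B] [Ring B'] [Algebra C B']

/-- Convolution product on `Hom_C(H, B)`. -/
noncomputable def cnv (φ ψ : H →ₗ[C] B) : H →ₗ[C] B :=
  (LinearMap.mul' C B) ∘ₗ (TensorProduct.map φ ψ) ∘ₗ (Coalgebra.comul (R := C))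

/-- Convolution unit on `Hom_C(H, B)`. -/
noncomputable def cuni : H →ₗ[C] B := (Algebra.linearMap C B) ∘ₗ (Coalgebra.counit (R := C))

lemma cnv_apply (φ ψ : H →ₗ[C] B) {g : H} (r : Rep C g) :
    cnv φ ψ g = ∑ i ∈ r.index, φ (r.left i) * ψ (r.right i) := by
  rw [cnv, LinearMap.comp_apply, LinearMap.comp_apply, ← r.eq, map_sum, map_sum]
  simp only [TensorProduct.map_tmul, LinearMap.mul'_apply]

lemma cuni_apply (g : H) : (cuni : H →ₗ[C] B) g = Coalgebra.counit (R := C) g • (1 : B) := by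
  simp [cuni, Algebra.algebraMap_eq_smul_one]

lemma cnv_assoc (φ ψ χ : H →ₗ[C] B) : cnv (cnv φ ψ) χ = cnv φ (cnv ψ χ) := by
  apply LinearMap.ext; intro g
  classical
  set r := Rep.arbitrary C g
  set RL : ∀ i : r.ι, Rep C (r.left i) := fun i => Rep.arbitrary C (r.left i)
  set RR : ∀ i : r.ι, Rep C (r.right i) := fun i => Rep.arbitrary C (r.right i)
  have base := Rep.sum_tmul_tmul_eq r RL RR
  have h := congrArg ((LinearMap.mul' C B) ∘ₗ (LinearMap.lTensor B (LinearMap.mul' C B)) ∘ₗ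
      (TensorProduct.map φ (TensorProduct.map ψ χ))) base
  simp only [map_sum, LinearMap.comp_apply, TensorProduct.map_tmul, LinearMap.lTensor_tmul,
    LinearMap.mul'_apply] at h
  calc (cnv (cnv φ ψ) χ) g
      = ∑ i ∈ r.index, (cnv φ ψ) (r.left i) * χ (r.right i) := cnv_apply _ _ r
    _ = ∑ i ∈ r.index, ∑ m ∈ (RL i).index,
          φ ((RL i).left m) * (ψ ((RL i).right m) * χ (r.right i)) := by
        refine Finset.sum_congr rfl fun i _ => ?_
        rw [cnv_apply φ ψ (RL i), Finset.sum_mul]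
        exact Finset.sum_congr rfl fun m _ => mul_assoc _ _ _
    _ = ∑ i ∈ r.index, ∑ n ∈ (RR i).index,
          φ (r.left i) * (ψ ((RR i).left n) * χ ((RR i).right n)) := h
    _ = (cnv φ (cnv ψ χ)) g := by
        rw [cnv_apply _ _ r]
        refine (Finset.sum_congr rfl fun i _ => ?_).symm
        rw [cnv_apply ψ χ (RR i), Finset.mul_sum]

lemma cnv_cuni_left (φ : H →ₗ[C] B) : cnv cuni φ = φ := by
  apply LinearMap.ext; intro g
  classical
  set r := Rep.arbitrary C g
  rw [cnv_apply _ _ r]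
  calc ∑ i ∈ r.index, (cuni : H →ₗ[C] B) (r.left i) * φ (r.right i)
      = ∑ i ∈ r.index, φ (Coalgebra.counit (R := C) (r.left i) • r.right i) := by
        refine Finset.sum_congr rfl fun i _ => ?_
        rw [cuni_apply, smul_mul_assoc, one_mul, map_smul]
    _ = φ g := by rw [← map_sum, counit_smul_right r]

lemma cnv_cuni_right (φ : H →ₗ[C] B) : cnv φ cuni = φ := by
  apply LinearMap.ext; intro g
  classical
  set r := Rep.arbitrary C g
  rw [cnv_apply _ _ r]
  calc ∑ i ∈ r.index, φ (r.left i) * (cuni : H →ₗ[C] B) (r.right i)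
      = ∑ i ∈ r.index, φ (Coalgebra.counit (R := C) (r.right i) • r.left i) := by
        refine Finset.sum_congr rfl fun i _ => ?_
        rw [cuni_apply, mul_smul_comm, mul_one, map_smul]
    _ = φ g := by rw [← map_sum, counit_smul_left r]

lemma cnv_unique {φ ψ₁ ψ₂ : H →ₗ[C] B} (h₁ : cnv ψ₁ φ = cuni) (h₂ : cnv φ ψ₂ = cuni) :
    ψ₁ = ψ₂ := by
  calc ψ₁ = cnv ψ₁ cuni := (cnv_cuni_right _).symm
    _ = cnv ψ₁ (cnv φ ψ₂) := by rw [h₂]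
    _ = cnv (cnv ψ₁ φ) ψ₂ := (cnv_assoc _ _ _).symm
    _ = cnv cuni ψ₂ := by rw [h₁]
    _ = ψ₂ := cnv_cuni_left _

/-- A unital multiplicative linear map `H →ₗ B` has `φ ∘ S` as two-sided convolution
inverse. -/
lemma cnv_antipode (φ : H →ₗ[C] B) (hm : ∀ x y : H, φ (x * y) = φ x * φ y)
    (h1 : φ 1 = 1) :
    cnv φ (φ ∘ₗ HopfAlgebra.antipode C) = cuni ∧
      cnv (φ ∘ₗ HopfAlgebra.antipode C) φ = cuni := by
  constructor <;> (apply LinearMap.ext; intro g; classical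
    set r := Rep.arbitrary C g
    rw [cnv_apply _ _ r, cuni_apply])
  · calc ∑ i ∈ r.index, φ (r.left i) * (φ ∘ₗ HopfAlgebra.antipode C) (r.right i)
        = φ (∑ i ∈ r.index, r.left i * HopfAlgebra.antipode (R := C) (r.right i)) := by
          rw [map_sum]; exact Finset.sum_congr rfl fun i _ => (hm _ _).symm
      _ = Coalgebra.counit (R := C) g • (1 : B) := by
          rw [Rep.sum_mul_antipode_eq_smul r, map_smul, h1]
  · calc ∑ i ∈ r.index, (φ ∘ₗ HopfAlgebra.antipode C) (r.left i) * φ (r.right i)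
        = φ (∑ i ∈ r.index, HopfAlgebra.antipode (R := C) (r.left i) * r.right i) := by
          rw [map_sum]; exact Finset.sum_congr rfl fun i _ => (hm _ _).symm
      _ = Coalgebra.counit (R := C) g • (1 : B) := by
          rw [Rep.sum_antipode_mul_eq_smul r, map_smul, h1]

lemma cnv_comp (θ : B →ₗ[C] B') (hθ : ∀ x y : B, θ (x * y) = θ x * θ y)
    (φ ψ : H →ₗ[C] B) : θ ∘ₗ cnv φ ψ = cnv (θ ∘ₗ φ) (θ ∘ₗ ψ) := by
  apply LinearMap.ext; intro g
  classical
  set r := Rep.arbitrary C g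
  rw [LinearMap.comp_apply, cnv_apply _ _ r, cnv_apply _ _ r, map_sum]
  exact Finset.sum_congr rfl fun i _ => hθ _ _

lemma cuni_comp (θ : B →ₗ[C] B') (h1 : θ 1 = 1) : θ ∘ₗ (cuni : H →ₗ[C] B) = cuni := by
  apply LinearMap.ext; intro g
  rw [LinearMap.comp_apply, cuni_apply, cuni_apply, map_smul, h1]

end Conv

section Antipode

lemma antipode_one' : HopfAlgebra.antipode (R := C) (1 : H) = 1 := by
  have h := HopfAlgebra.mul_antipode_rTensor_comul_apply (R := C) (1 : H)
  rw [Bialgebra.comul_one, Algebra.TensorProduct.one_def] at h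
  simpa using h

/-- `Δ ∘ S = (S ⊗ S) ∘ τ ∘ Δ`. -/
lemma comul_antipode' :
    (Coalgebra.comul (R := C)) ∘ₗ (HopfAlgebra.antipode (R := C) (A := H))
      = (TensorProduct.map (HopfAlgebra.antipode (R := C)) (HopfAlgebra.antipode (R := C))) ∘ₗ
        (TensorProduct.comm C H H).toLinearMap ∘ₗ (Coalgebra.comul (R := C)) := by
  have hm : ∀ x y : H, Coalgebra.comul (R := C) (x * y) = Coalgebra.comul x * Coalgebra.comul y :=
    Bialgebra.comul_mul
  have h1 : Coalgebra.comul (R := C) (1 : H) = 1 := Bialgebra.comul_one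
  have hinv := cnv_antipode (B := H ⊗[C] H) (Coalgebra.comul (R := C)) hm h1
  refine cnv_unique (φ := (Coalgebra.comul (R := C) (A := H))) hinv.2 ?_
  -- `cnv Δ G = cuni` where `G = (S ⊗ S) ∘ τ ∘ Δ`
  apply LinearMap.ext; intro g
  classical
  set S := HopfAlgebra.antipode (R := C) (A := H)
  set r := Rep.arbitrary C g
  set RL : ∀ i : r.ι, Rep C (r.left i) := fun i => Rep.arbitrary C (r.left i)
  set RR : ∀ i : r.ι, Rep C (r.right i) := fun i => Rep.arbitrary C (r.right i)
  set RU : ∀ (i : r.ι) (n : (RR i).ι), Rep C ((RR i).left n) :=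
    fun i n => Rep.arbitrary C ((RR i).left n)
  set β : H →ₗ[C] H →ₗ[C] H := (LinearMap.mul C H).compl₂ S with hβ
  have hβap : ∀ x y : H, β x y = x * S y := fun x y => rfl
  rw [cnv_apply _ _ r, cuni_apply]
  calc ∑ i ∈ r.index, Coalgebra.comul (R := C) (r.left i) *
        ((TensorProduct.map S S) ∘ₗ (TensorProduct.comm C H H).toLinearMap ∘ₗ
          (Coalgebra.comul (R := C))) (r.right i)
      = ∑ i ∈ r.index, ∑ m ∈ (RL i).index, ∑ n ∈ (RR i).index,
          (β ((RL i).left m) ((RR i).right n)) ⊗ₜ[C] (β ((RL i).right m) ((RR i).left n)) := by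
        refine Finset.sum_congr rfl fun i _ => ?_
        rw [← (RL i).eq]
        simp only [LinearMap.comp_apply]
        rw [← (RR i).eq]
        simp only [map_sum, LinearEquiv.coe_coe, TensorProduct.comm_tmul,
          TensorProduct.map_tmul, Finset.sum_mul_sum, Algebra.TensorProduct.tmul_mul_tmul, hβap]
    _ = ∑ i ∈ r.index, ∑ n ∈ (RR i).index, ∑ p ∈ (RU i n).index,
          (β (r.left i) ((RR i).right n)) ⊗ₜ[C] (β ((RU i n).left p) ((RU i n).right p)) :=
        four_leg β β r RL RR RU
    _ = ∑ i ∈ r.index, ∑ n ∈ (RR i).index,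
          (Coalgebra.counit (R := C) ((RR i).left n)) •
            ((r.left i * S ((RR i).right n)) ⊗ₜ[C] (1 : H)) := by
        refine Finset.sum_congr rfl fun i _ => Finset.sum_congr rfl fun n _ => ?_
        rw [← TensorProduct.tmul_sum]
        rw [show ∑ p ∈ (RU i n).index, β ((RU i n).left p) ((RU i n).right p)
            = Coalgebra.counit (R := C) ((RR i).left n) • (1 : H) from
          Rep.sum_mul_antipode_eq_smul (RU i n)]
        rw [TensorProduct.tmul_smul, hβap]
    _ = Coalgebra.counit (R := C) g • (1 : H ⊗[C] H) := by
        rw [Algebra.TensorProduct.one_def]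
        calc ∑ i ∈ r.index, ∑ n ∈ (RR i).index,
              (Coalgebra.counit (R := C) ((RR i).left n)) •
                ((r.left i * S ((RR i).right n)) ⊗ₜ[C] (1 : H))
            = ∑ i ∈ r.index, (r.left i * S (r.right i)) ⊗ₜ[C] (1 : H) := by
              refine Finset.sum_congr rfl fun i _ => ?_
              have : ∑ n ∈ (RR i).index,
                  Coalgebra.counit (R := C) ((RR i).left n) • ((RR i).right n) = r.right i :=
                counit_smul_right (RR i)
              calc ∑ n ∈ (RR i).index, (Coalgebra.counit (R := C) ((RR i).left n)) •
                    ((r.left i * S ((RR i).right n)) ⊗ₜ[C] (1 : H))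
                  = ∑ n ∈ (RR i).index, ((r.left i * S
                      (Coalgebra.counit (R := C) ((RR i).left n) • (RR i).right n)) ⊗ₜ[C] (1 : H)) := by
                    refine Finset.sum_congr rfl fun n _ => ?_
                    rw [map_smul, mul_smul_comm, TensorProduct.smul_tmul']
                _ = _ := by
                    rw [← TensorProduct.sum_tmul, ← Finset.mul_sum, ← map_sum, this]
            _ = (∑ i ∈ r.index, r.left i * S (r.right i)) ⊗ₜ[C] (1 : H) := by
              rw [TensorProduct.sum_tmul]
            _ = (Coalgebra.counit (R := C) g • (1:H)) ⊗ₜ[C] (1 : H) := by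
              rw [Rep.sum_mul_antipode_eq_smul r]
            _ = Coalgebra.counit (R := C) g • ((1:H) ⊗ₜ[C] (1 : H)) := by
              rw [TensorProduct.smul_tmul']

/-- Repr of `S g` from a Repr of `g`. -/
noncomputable def reprAntipode {g : H} (r : Rep C g) :
    Rep C (HopfAlgebra.antipode (R := C) g) where
  index := r.index
  left := fun i => HopfAlgebra.antipode (R := C) (r.right i)
  right := fun i => HopfAlgebra.antipode (R := C) (r.left i)
  eq := by
    have h := congrArg (fun (φ : H →ₗ[C] H ⊗[C] H) => φ g) (comul_antipode' (C := C) (H := H))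
    simp only [LinearMap.comp_apply] at h
    rw [h, ← r.eq, map_sum, map_sum]
    simp

end Antipode

section GLCore

variable (α : StarAction C H A)

lemma act_ab_repr (x : H) (a b : A) (r : Rep C x) :
    α.act x (a * b) = ∑ i ∈ r.index, α.act (r.left i) a * α.act (r.right i) b := by
  rw [α.act_ab x a b r.index.card _ _ (swRep_of_repr r)]
  exact (sum_fin r.index fun i => α.act (r.left i) a * α.act (r.right i) b).symm

variable {α}

lemma GL_one {f : H →ₗ[C] A} (hf : f ∈ GLset α) : f 1 = 1 := hf.1

lemma GL_cC {f : H →ₗ[C] A} (hf : f ∈ GLset α) (g k : H) (r : Rep C g) :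
    f (g * k) = ∑ i ∈ r.index, f (r.left i) * α.act (r.right i) (f k) := by
  rw [hf.2.1 g k r.index.card _ _ (swRep_of_repr r)]
  exact (sum_fin r.index fun i => f (r.left i) * α.act (r.right i) (f k)).symm

lemma GL_cX {f : H →ₗ[C] A} (hf : f ∈ GLset α) (g : H) (b : A) (r : Rep C g) :
    ∑ i ∈ r.index, α.act (r.left i) b * f (r.right i)
      = ∑ i ∈ r.index, f (r.left i) * α.act (r.right i) b := by
  rw [sum_fin r.index fun i => α.act (r.left i) b * f (r.right i),
    sum_fin r.index fun i => f (r.left i) * α.act (r.right i) b]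
  exact hf.2.2 g b r.index.card _ _ (swRep_of_repr r)

/-- The convolution ring structure on `H →ₗ[C] A`. -/
noncomputable instance convRing : Ring (H →ₗ[C] A) :=
  { (inferInstance : AddCommGroup (H →ₗ[C] A)) with
    mul := cnv
    one := cuni
    mul_assoc := cnv_assoc
    one_mul := cnv_cuni_left
    mul_one := cnv_cuni_right
    left_distrib := fun φ ψ χ => by
      apply LinearMap.ext; intro g; classical
      show cnv φ (ψ + χ) g = cnv φ ψ g + cnv φ χ g
      rw [cnv_apply _ _ (Rep.arbitrary C g), cnv_apply _ _ (Rep.arbitrary C g),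
        cnv_apply _ _ (Rep.arbitrary C g), ← Finset.sum_add_distrib]
      simp [mul_add]
    right_distrib := fun φ ψ χ => by
      apply LinearMap.ext; intro g; classical
      show cnv (φ + ψ) χ g = cnv φ χ g + cnv ψ χ g
      rw [cnv_apply _ _ (Rep.arbitrary C g), cnv_apply _ _ (Rep.arbitrary C g),
        cnv_apply _ _ (Rep.arbitrary C g), ← Finset.sum_add_distrib]
      simp [add_mul]
    zero_mul := fun φ => by
      apply LinearMap.ext; intro g; classical
      show cnv 0 φ g = 0
      rw [cnv_apply _ _ (Rep.arbitrary C g)]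
      simp
    mul_zero := fun φ => by
      apply LinearMap.ext; intro g; classical
      show cnv φ 0 g = 0
      rw [cnv_apply _ _ (Rep.arbitrary C g)]
      simp }

lemma convMul_def (φ ψ : H →ₗ[C] A) : φ * ψ = cnv φ ψ := rfl
lemma convOne_def : (1 : H →ₗ[C] A) = cuni := rfl

noncomputable instance convAlgebra : Algebra C (H →ₗ[C] A) :=
  Algebra.ofModule
    (fun c φ ψ => by
      apply LinearMap.ext; intro g; classical
      show cnv (c • φ) ψ g = c • cnv φ ψ g
      rw [cnv_apply _ _ (Rep.arbitrary C g), cnv_apply _ _ (Rep.arbitrary C g),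
        Finset.smul_sum]
      simp [smul_mul_assoc])
    (fun c φ ψ => by
      apply LinearMap.ext; intro g; classical
      show cnv φ (c • ψ) g = c • cnv φ ψ g
      rw [cnv_apply _ _ (Rep.arbitrary C g), cnv_apply _ _ (Rep.arbitrary C g),
        Finset.smul_sum]
      simp [mul_smul_comm])

lemma conv_eq_cnv (φ ψ : H →ₗ[C] A) : conv φ ψ = cnv φ ψ := by
  unfold conv cnv
  have : TensorProduct.lift ((LinearMap.mul C A).compl₁₂ φ ψ)
      = (LinearMap.mul' C A) ∘ₗ (TensorProduct.map φ ψ) := by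
    apply TensorProduct.ext'
    intro x y
    simp [LinearMap.compl₁₂_apply, LinearMap.mul'_apply]
  rw [this, LinearMap.comp_assoc]

lemma convUnit_eq_cuni : (convUnit : H →ₗ[C] A) = cuni := rfl

end GLCore

section Fmaps

variable (α : StarAction C H A)

/-- `g ↦ g ▷ b`. -/
noncomputable def aF (b : A) : H →ₗ[C] A := α.act.flip b

@[simp] lemma aF_apply (b : A) (g : H) : aF α b g = α.act g b := rfl

/-- `F1 φ : g ⊗ k ↦ ε(k) φ(g)` (curried). -/
noncomputable def F1 (φ : H →ₗ[C] A) : H →ₗ[C] (H →ₗ[C] A) where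
  toFun := fun g => (Coalgebra.counit (R := C) (A := H)).smulRight (φ g)
  map_add' := fun x y => by ext k; simp
  map_smul' := fun c x => by
    ext k
    simp only [LinearMap.smulRight_apply, map_smul, RingHom.id_apply, LinearMap.smul_apply]
    exact smul_comm _ _ _

@[simp] lemma F1_apply (φ : H →ₗ[C] A) (g k : H) :
    F1 φ g k = Coalgebra.counit (R := C) k • φ g := rfl

/-- `F2 φ : g ⊗ k ↦ g ▷ φ(k)` (curried). -/
noncomputable def F2 (φ : H →ₗ[C] A) : H →ₗ[C] (H →ₗ[C] A) where
  toFun := fun g => (α.act g) ∘ₗ φ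
  map_add' := fun x y => by ext k; simp
  map_smul' := fun c x => by ext k; simp

@[simp] lemma F2_apply (φ : H →ₗ[C] A) (g k : H) : F2 α φ g k = α.act g (φ k) := rfl

/-- `Tmu φ : g ⊗ k ↦ φ (g k)` (curried). -/
noncomputable def Tmu (φ : H →ₗ[C] A) : H →ₗ[C] (H →ₗ[C] A) :=
  (LinearMap.llcomp C H H A φ) ∘ₗ (LinearMap.mul C H)

@[simp] lemma Tmu_apply (φ : H →ₗ[C] A) (g k : H) : Tmu φ g k = φ (g * k) := rfl

variable {α}

lemma cnvB_apply₂ (Φ Ψ : H →ₗ[C] (H →ₗ[C] A)) {g k : H} (rg : Rep C g) (rk : Rep C k) :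
    cnv Φ Ψ g k = ∑ i ∈ rg.index, ∑ j ∈ rk.index,
      Φ (rg.left i) (rk.left j) * Ψ (rg.right i) (rk.right j) := by
  rw [cnv_apply _ _ rg, LinearMap.sum_apply]
  refine Finset.sum_congr rfl fun i _ => ?_
  rw [convMul_def, cnv_apply _ _ rk]

lemma cuniB_apply (g k : H) : (cuni : H →ₗ[C] (H →ₗ[C] A)) g k
    = Coalgebra.counit (R := C) g • (Coalgebra.counit (R := C) k • (1 : A)) := by
  rw [cuni_apply, LinearMap.smul_apply, convOne_def, cuni_apply]

lemma F1F2_apply (φ ψ : H →ₗ[C] A) {g : H} (rg : Rep C g) (k : H) :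
    cnv (F1 φ) (F2 α ψ) g k = ∑ i ∈ rg.index, φ (rg.left i) * α.act (rg.right i) (ψ k) := by
  classical
  set rk := Rep.arbitrary C k
  rw [cnvB_apply₂ _ _ rg rk]
  refine Finset.sum_congr rfl fun i _ => ?_
  simp only [F1_apply, F2_apply]
  calc ∑ j ∈ rk.index, (Coalgebra.counit (R := C) (rk.left j) • φ (rg.left i)) *
        α.act (rg.right i) (ψ (rk.right j))
      = φ (rg.left i) * ∑ j ∈ rk.index, α.act (rg.right i)
          (ψ (Coalgebra.counit (R := C) (rk.left j) • rk.right j)) := by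
        rw [Finset.mul_sum]
        refine Finset.sum_congr rfl fun j _ => ?_
        rw [map_smul, map_smul, smul_mul_assoc, mul_smul_comm]
    _ = φ (rg.left i) * α.act (rg.right i) (ψ k) := by
        rw [← map_sum, ← map_sum, counit_smul_right rk]

lemma F2F1_apply (φ ψ : H →ₗ[C] A) {g : H} (rg : Rep C g) (k : H) :
    cnv (F2 α φ) (F1 ψ) g k = ∑ i ∈ rg.index, α.act (rg.left i) (φ k) * ψ (rg.right i) := by
  classical
  set rk := Rep.arbitrary C k
  rw [cnvB_apply₂ _ _ rg rk]
  refine Finset.sum_congr rfl fun i _ => ?_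
  simp only [F1_apply, F2_apply]
  calc ∑ j ∈ rk.index, α.act (rg.left i) (φ (rk.left j)) *
        (Coalgebra.counit (R := C) (rk.right j) • ψ (rg.right i))
      = (∑ j ∈ rk.index, α.act (rg.left i)
          (φ (Coalgebra.counit (R := C) (rk.right j) • rk.left j))) * ψ (rg.right i) := by
        rw [Finset.sum_mul]
        refine Finset.sum_congr rfl fun j _ => ?_
        rw [map_smul, map_smul, mul_smul_comm, smul_mul_assoc]
    _ = α.act (rg.left i) (φ k) * ψ (rg.right i) := by
        rw [← map_sum, ← map_sum, counit_smul_left rk]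

lemma Tmu_cnv (φ ψ : H →ₗ[C] A) : Tmu (cnv φ ψ) = cnv (Tmu φ) (Tmu ψ) := by
  apply LinearMap.ext; intro g; apply LinearMap.ext; intro k
  classical
  set rg := Rep.arbitrary C g
  set rk := Rep.arbitrary C k
  rw [Tmu_apply, cnvB_apply₂ _ _ rg rk, cnv_apply _ _ (reprMul rg rk)]
  simp only [Tmu_apply]
  exact Finset.sum_product (s := rg.index) (t := rk.index)
    (f := fun p => φ (rg.left p.1 * rk.left p.2) * ψ (rg.right p.1 * rk.right p.2))

lemma Tmu_cuni : Tmu (cuni : H →ₗ[C] A) = cuni := by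
  apply LinearMap.ext; intro g; apply LinearMap.ext; intro k
  rw [Tmu_apply, cuniB_apply, cuni_apply, Bialgebra.counit_mul, mul_smul]

lemma F1_cnv (φ ψ : H →ₗ[C] A) : cnv (F1 φ) (F1 ψ) = F1 (cnv φ ψ) := by
  apply LinearMap.ext; intro g; apply LinearMap.ext; intro k
  classical
  set rg := Rep.arbitrary C g
  set rk := Rep.arbitrary C k
  rw [cnvB_apply₂ _ _ rg rk, F1_apply, cnv_apply _ _ rg, Finset.smul_sum]
  refine Finset.sum_congr rfl fun i _ => ?_
  simp only [F1_apply]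
  calc ∑ j ∈ rk.index, (Coalgebra.counit (R := C) (rk.left j) • φ (rg.left i)) *
        (Coalgebra.counit (R := C) (rk.right j) • ψ (rg.right i))
      = ∑ j ∈ rk.index, (Coalgebra.counit (R := C) (rk.left j) *
          Coalgebra.counit (R := C) (rk.right j)) • (φ (rg.left i) * ψ (rg.right i)) := by
        refine Finset.sum_congr rfl fun j _ => ?_
        rw [smul_mul_assoc, mul_smul_comm, smul_smul]
    _ = Coalgebra.counit (R := C) k • (φ (rg.left i) * ψ (rg.right i)) := by
        rw [← Finset.sum_smul, counit_counit rk]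

lemma F1_cuni : F1 (cuni : H →ₗ[C] A) = cuni := by
  apply LinearMap.ext; intro g; apply LinearMap.ext; intro k
  rw [F1_apply, cuniB_apply, cuni_apply, smul_comm]

lemma F2_cnv (φ ψ : H →ₗ[C] A) : cnv (F2 α φ) (F2 α ψ) = F2 α (cnv φ ψ) := by
  apply LinearMap.ext; intro g; apply LinearMap.ext; intro k
  classical
  set rg := Rep.arbitrary C g
  set rk := Rep.arbitrary C k
  rw [cnvB_apply₂ _ _ rg rk, F2_apply, cnv_apply _ _ rk, map_sum, Finset.sum_comm]
  refine Finset.sum_congr rfl fun j _ => ?_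
  simp only [F2_apply]
  exact (act_ab_repr α g (φ (rk.left j)) (ψ (rk.right j)) rg).symm

lemma F2_cuni : F2 α (cuni : H →ₗ[C] A) = cuni := by
  apply LinearMap.ext; intro g; apply LinearMap.ext; intro k
  rw [F2_apply, cuniB_apply, cuni_apply, map_smul, α.act_unit, smul_comm]

lemma GL_cX_hom {f : H →ₗ[C] A} (hf : f ∈ GLset α) (b : A) :
    cnv (aF α b) f = cnv f (aF α b) := by
  apply LinearMap.ext; intro g
  classical
  set rg := Rep.arbitrary C g
  rw [cnv_apply _ _ rg, cnv_apply _ _ rg]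
  simpa only [aF_apply] using GL_cX hf g b rg

lemma F2F1_swap {φ ψ : H →ₗ[C] A} (hsw : ∀ b : A, cnv (aF α b) ψ = cnv ψ (aF α b)) :
    cnv (F2 α φ) (F1 ψ) = cnv (F1 ψ) (F2 α φ) := by
  apply LinearMap.ext; intro g; apply LinearMap.ext; intro k
  classical
  set rg := Rep.arbitrary C g
  rw [F2F1_apply _ _ rg, F1F2_apply _ _ rg]
  have h := congrArg (fun (χ : H →ₗ[C] A) => χ g) (hsw (φ k))
  simp only [cnv_apply _ _ rg, aF_apply] at h
  exact h

lemma GL_fact {f : H →ₗ[C] A} (hf : f ∈ GLset α) : Tmu f = cnv (F1 f) (F2 α f) := by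
  apply LinearMap.ext; intro g; apply LinearMap.ext; intro k
  classical
  set rg := Rep.arbitrary C g
  rw [Tmu_apply, F1F2_apply _ _ rg]
  exact GL_cC hf g k rg

end Fmaps

section Smash

variable (α : StarAction C H A)

/-- The smash product `A # H` as a type synonym for `A ⊗[C] H`. -/
def Smash (_α : StarAction C H A) : Type _ := A ⊗[C] H

noncomputable instance : AddCommGroup (Smash α) := inferInstanceAs (AddCommGroup (A ⊗[C] H))
noncomputable instance : Module C (Smash α) := inferInstanceAs (Module C (A ⊗[C] H))

/-- Inner piece of the smash multiplication: `x ⊗ y ↦ (act x) ⊗ (mulLeft y)`. -/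
noncomputable def smashInner : H →ₗ[C] H →ₗ[C] ((A ⊗[C] H) →ₗ[C] (A ⊗[C] H)) :=
  LinearMap.mk₂ C (fun x y => TensorProduct.map (α.act x) (LinearMap.mulLeft C y))
    (fun x x' y => by
      apply TensorProduct.ext'; intro b k
      simp [TensorProduct.add_tmul])
    (fun c x y => by
      apply TensorProduct.ext'; intro b k
      simp [TensorProduct.smul_tmul'])
    (fun x y y' => by
      apply TensorProduct.ext'; intro b k
      simp [add_mul, TensorProduct.tmul_add])
    (fun c x y => by
      apply TensorProduct.ext'; intro b k
      simp [smul_mul_assoc, TensorProduct.tmul_smul])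

lemma mapMulLeft_add (a a' : A) :
    TensorProduct.map (LinearMap.mulLeft C (a + a')) (LinearMap.id (M := H))
      = TensorProduct.map (LinearMap.mulLeft C a) LinearMap.id
        + TensorProduct.map (LinearMap.mulLeft C a') LinearMap.id := by
  apply TensorProduct.ext'; intro b k
  simp [add_mul, TensorProduct.add_tmul]

lemma mapMulLeft_smul (c : C) (a : A) :
    TensorProduct.map (LinearMap.mulLeft C (c • a)) (LinearMap.id (M := H))
      = c • TensorProduct.map (LinearMap.mulLeft C a) LinearMap.id := by
  apply TensorProduct.ext'; intro b k
  simp [smul_mul_assoc, TensorProduct.smul_tmul']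

/-- The smash multiplication, as a bilinear map on `A ⊗ H`. -/
noncomputable def smashMul : (A ⊗[C] H) →ₗ[C] (A ⊗[C] H) →ₗ[C] (A ⊗[C] H) :=
  TensorProduct.lift (LinearMap.mk₂ C
    (fun a g => (TensorProduct.map (LinearMap.mulLeft C a) LinearMap.id) ∘ₗ
      ((TensorProduct.lift (smashInner α)) ∘ₗ (Coalgebra.comul (R := C))) g)
    (fun a a' g => by rw [mapMulLeft_add, LinearMap.add_comp])
    (fun c a g => by rw [mapMulLeft_smul, LinearMap.smul_comp])
    (fun a g g' => by rw [map_add, LinearMap.comp_add])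
    (fun c a g => by rw [map_smul, LinearMap.comp_smul]))

lemma smashMul_tmul (a b : A) (g k : H) (rg : Rep C g) :
    smashMul α (a ⊗ₜ[C] g) (b ⊗ₜ[C] k)
      = ∑ i ∈ rg.index, (a * α.act (rg.left i) b) ⊗ₜ[C] (rg.right i * k) := by
  rw [smashMul, TensorProduct.lift.tmul, LinearMap.mk₂_apply, LinearMap.comp_apply,
    LinearMap.comp_apply, ← rg.eq, map_sum, LinearMap.sum_apply, map_sum]
  refine Finset.sum_congr rfl fun i _ => ?_
  rw [TensorProduct.lift.tmul]
  simp [smashInner]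

noncomputable instance smashRing : Ring (Smash α) :=
  { (inferInstance : AddCommGroup (Smash α)) with
    mul := fun x y => smashMul α x y
    one := (1 ⊗ₜ[C] 1 : A ⊗[C] H)
    left_distrib := fun x y z => map_add (smashMul α x) y z
    right_distrib := fun (x y z : A ⊗[C] H) => by
      show smashMul α (x + y) z = smashMul α x z + smashMul α y z
      rw [map_add, LinearMap.add_apply]
    zero_mul := fun (x : A ⊗[C] H) => by show smashMul α 0 x = 0; rw [map_zero, LinearMap.zero_apply]
    mul_zero := fun x => map_zero (smashMul α x)
    one_mul := fun x => by
      show smashMul α (1 ⊗ₜ[C] 1) x = x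
      induction x using TensorProduct.induction_on with
      | zero => simp
      | add u v hu hv => simp only [map_add, LinearMap.add_apply, hu, hv]
      | tmul b k =>
        rw [smashMul_tmul α 1 b 1 k (reprOne C)]
        simp [reprOne, α.act_one]
    mul_one := fun x => by
      show smashMul α x (1 ⊗ₜ[C] 1) = x
      induction x using TensorProduct.induction_on with
      | zero => simp
      | add u v hu hv => simp only [map_add, LinearMap.add_apply, hu, hv]
      | tmul a g =>
        classical
        set rg := Rep.arbitrary C g
        rw [smashMul_tmul α a 1 g 1 rg]
        calc ∑ i ∈ rg.index, (a * α.act (rg.left i) 1) ⊗ₜ[C] (rg.right i * 1)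
            = ∑ i ∈ rg.index, a ⊗ₜ[C]
                (Coalgebra.counit (R := C) (rg.left i) • rg.right i) := by
              refine Finset.sum_congr rfl fun i _ => ?_
              rw [α.act_unit, mul_smul_comm, mul_one, mul_one, TensorProduct.smul_tmul]
          _ = a ⊗ₜ[C] g := by rw [← TensorProduct.tmul_sum, counit_smul_right rg]
    mul_assoc := fun (x y z : A ⊗[C] H) => by
      show smashMul α (smashMul α x y) z = smashMul α x (smashMul α y z)
      induction x using TensorProduct.induction_on with
      | zero => simp
      | add u v hu hv => simp only [map_add, LinearMap.add_apply, hu, hv]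
      | tmul a g =>
        induction y using TensorProduct.induction_on with
        | zero => simp
        | add u v hu hv => simp only [map_add, LinearMap.add_apply, hu, hv]
        | tmul b k =>
          induction z using TensorProduct.induction_on with
          | zero => simp
          | add u v hu hv => simp only [map_add, LinearMap.add_apply, hu, hv]
          | tmul c m =>
            classical
            set rg := Rep.arbitrary C g with hrg
            set rk := Rep.arbitrary C k with hrk
            set RL : ∀ i : rg.ι, Rep C (rg.left i) :=
              fun i => Rep.arbitrary C (rg.left i) with hRL
            set RR : ∀ i : rg.ι, Rep C (rg.right i) :=
              fun i => Rep.arbitrary C (rg.right i) with hRR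
            have base := Rep.sum_tmul_tmul_eq rg RL RR
            set Θ : rk.ι → ((H ⊗[C] (H ⊗[C] H)) →ₗ[C] A ⊗[C] H) := fun j =>
              (TensorProduct.map
                ((LinearMap.mul' C A) ∘ₗ
                  (TensorProduct.map ((LinearMap.mulLeft C a) ∘ₗ (aF α b))
                    (aF α (α.act (rk.left j) c))))
                (LinearMap.mulRight C (rk.right j * m))) ∘ₗ
                (TensorProduct.assoc C H H H).symm.toLinearMap with hΘdef
            have hΘ : ∀ (j : rk.ι) (x y z : H), Θ j (x ⊗ₜ[C] (y ⊗ₜ[C] z))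
                = ((a * α.act x b) * α.act y (α.act (rk.left j) c)) ⊗ₜ[C]
                  (z * (rk.right j * m)) := by
              intro j x y z
              simp [hΘdef, LinearMap.mul'_apply, mul_assoc]
            have hbase : ∀ j : rk.ι,
                ∑ i ∈ rg.index, ∑ mm ∈ (RL i).index, Θ j
                  (((RL i).left mm) ⊗ₜ[C] (((RL i).right mm) ⊗ₜ[C] (rg.right i)))
                = ∑ i ∈ rg.index, ∑ n ∈ (RR i).index, Θ j
                  ((rg.left i) ⊗ₜ[C] (((RR i).left n) ⊗ₜ[C] ((RR i).right n))) := by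
              intro j
              have h := congrArg (Θ j) base
              simpa only [map_sum] using h
            rw [smashMul_tmul α a b g k rg, map_sum, LinearMap.sum_apply]
            rw [smashMul_tmul α b c k m rk, map_sum]
            calc ∑ i ∈ rg.index, smashMul α ((a * α.act (rg.left i) b) ⊗ₜ[C] (rg.right i * k))
                  (c ⊗ₜ[C] m)
                = ∑ i ∈ rg.index, ∑ n ∈ (RR i).index, ∑ j ∈ rk.index,
                    ((a * α.act (rg.left i) b) *
                      α.act ((RR i).left n * rk.left j) c) ⊗ₜ[C]
                      (((RR i).right n * rk.right j) * m) := by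
                  refine Finset.sum_congr rfl fun i _ => ?_
                  rw [smashMul_tmul α _ c _ m (reprMul (RR i) rk)]
                  exact Finset.sum_product (s := (RR i).index) (t := rk.index)
                    (f := fun p => ((a * α.act (rg.left i) b) *
                      α.act ((RR i).left p.1 * rk.left p.2) c) ⊗ₜ[C]
                      (((RR i).right p.1 * rk.right p.2) * m))
              _ = ∑ j ∈ rk.index, ∑ i ∈ rg.index, ∑ n ∈ (RR i).index,
                    Θ j ((rg.left i) ⊗ₜ[C] (((RR i).left n) ⊗ₜ[C] ((RR i).right n))) := by
                  rw [← Finset.sum_comm]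
                  refine Finset.sum_congr rfl fun i _ => ?_
                  rw [← Finset.sum_comm]
                  refine Finset.sum_congr rfl fun j _ => Finset.sum_congr rfl fun n _ => ?_
                  rw [hΘ, α.act_mul, mul_assoc ((RR i).right n)]
              _ = ∑ j ∈ rk.index, ∑ i ∈ rg.index, ∑ mm ∈ (RL i).index,
                    Θ j (((RL i).left mm) ⊗ₜ[C] (((RL i).right mm) ⊗ₜ[C] (rg.right i))) := by
                  exact (Finset.sum_congr rfl fun j _ => hbase j).symm
              _ = ∑ j ∈ rk.index, smashMul α (a ⊗ₜ[C] g)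
                    ((b * α.act (rk.left j) c) ⊗ₜ[C] (rk.right j * m)) := by
                  refine Finset.sum_congr rfl fun j _ => ?_
                  rw [smashMul_tmul α a _ g _ rg]
                  refine Finset.sum_congr rfl fun i _ => ?_
                  rw [act_ab_repr α (rg.left i) b (α.act (rk.left j) c) (RL i),
                    Finset.mul_sum, TensorProduct.sum_tmul]
                  refine Finset.sum_congr rfl fun mm _ => ?_
                  rw [hΘ, mul_assoc] }

end Smash

section SmashMaps

variable (α : StarAction C H A)

lemma smash_mul_def (x y : Smash α) : x * y = smashMul α x y := rfl

noncomputable instance smashAlgebra : Algebra C (Smash α) :=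
  Algebra.ofModule
    (fun c (x y : A ⊗[C] H) => by
      show smashMul α (c • x) y = c • smashMul α x y
      rw [map_smul, LinearMap.smul_apply])
    (fun c (x y : A ⊗[C] H) => by
      show smashMul α x (c • y) = c • smashMul α x y
      rw [map_smul])

/-- `a ↦ a ⊗ 1`. -/
noncomputable def iS : A →ₗ[C] Smash α := (TensorProduct.mk C A H).flip 1
/-- `g ↦ 1 ⊗ g`. -/
noncomputable def rS : H →ₗ[C] Smash α := TensorProduct.mk C A H 1
/-- `a ⊗ g ↦ ε(g) a`. -/
noncomputable def pS : Smash α →ₗ[C] A :=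
  (TensorProduct.rid C A).toLinearMap ∘ₗ (LinearMap.lTensor A (Coalgebra.counit (R := C)))
/-- `g ↦ φ(g₍₁₎) ⊗ g₍₂₎`. -/
noncomputable def PhiS (φ : H →ₗ[C] A) : H →ₗ[C] Smash α :=
  (TensorProduct.map φ LinearMap.id) ∘ₗ (Coalgebra.comul (R := C))

/-- The candidate convolution inverse `g ↦ g₍₁₎ ▷ f(S(g₍₂₎))`. -/
noncomputable def invf (f : H →ₗ[C] A) : H →ₗ[C] A :=
  (TensorProduct.lift α.act) ∘ₗ (LinearMap.lTensor H (f ∘ₗ HopfAlgebra.antipode C)) ∘ₗ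
    (Coalgebra.comul (R := C))

@[simp] lemma iS_apply (a : A) : iS α a = (a ⊗ₜ[C] (1 : H) : A ⊗[C] H) := rfl
@[simp] lemma rS_apply (g : H) : rS α g = ((1 : A) ⊗ₜ[C] g : A ⊗[C] H) := rfl

lemma PhiS_apply (φ : H →ₗ[C] A) {g : H} (r : Rep C g) :
    PhiS α φ g = ∑ i ∈ r.index, (φ (r.left i) ⊗ₜ[C] r.right i : A ⊗[C] H) := by
  show ((TensorProduct.map φ LinearMap.id) ∘ₗ (Coalgebra.comul (R := C))) g = _
  rw [LinearMap.comp_apply, ← r.eq, map_sum]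
  refine Finset.sum_congr rfl fun i _ => ?_
  rw [TensorProduct.map_tmul, LinearMap.id_coe, id_eq]

lemma invf_apply (f : H →ₗ[C] A) {g : H} (r : Rep C g) :
    invf α f g = ∑ i ∈ r.index, α.act (r.left i) (f (HopfAlgebra.antipode (R := C) (r.right i))) := by
  rw [invf, LinearMap.comp_apply, LinearMap.comp_apply, ← r.eq, map_sum, map_sum]
  simp

lemma pS_iS (a : A) : pS α (iS α a) = a := by
  show (TensorProduct.rid C A) ((LinearMap.lTensor A (Coalgebra.counit (R := C)))
    ((a ⊗ₜ[C] (1 : H) : A ⊗[C] H))) = a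
  rw [LinearMap.lTensor_tmul, Bialgebra.counit_one, TensorProduct.rid_tmul, one_smul]

lemma iS_cancel {u v : H →ₗ[C] A} (h : iS α ∘ₗ u = iS α ∘ₗ v) : u = v := by
  apply LinearMap.ext; intro g
  have h' := LinearMap.congr_fun h g
  simp only [LinearMap.comp_apply] at h'
  have := congrArg (pS α) h'
  rwa [pS_iS, pS_iS] at this

lemma iS_mul (a b : A) : iS α (a * b) = iS α a * iS α b := by
  rw [smash_mul_def, iS_apply, iS_apply, iS_apply,
    smashMul_tmul α a b 1 1 (reprOne C)]
  simp [reprOne, α.act_one]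
  rfl

lemma iS_one : iS α 1 = 1 := rfl

lemma smash_tmul_mul_one (a : A) (x y : H) :
    smashMul α (a ⊗ₜ[C] x) ((1 : A) ⊗ₜ[C] y) = a ⊗ₜ[C] (x * y) := by
  classical
  set r := Rep.arbitrary C x
  rw [smashMul_tmul α a 1 x y r]
  calc ∑ i ∈ r.index, (a * α.act (r.left i) 1) ⊗ₜ[C] (r.right i * y)
      = ∑ i ∈ r.index, a ⊗ₜ[C] ((Coalgebra.counit (R := C) (r.left i) • r.right i) * y) := by
        refine Finset.sum_congr rfl fun i _ => ?_
        rw [α.act_unit, mul_smul_comm, mul_one, TensorProduct.smul_tmul, smul_mul_assoc]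
    _ = a ⊗ₜ[C] (x * y) := by
        rw [← TensorProduct.tmul_sum, ← Finset.sum_mul, counit_smul_right r]

lemma rS_mul (g k : H) : rS α (g * k) = rS α g * rS α k := by
  rw [smash_mul_def, rS_apply, rS_apply, rS_apply, smash_tmul_mul_one]

lemma rS_one : rS α 1 = 1 := rfl

lemma PhiS_one (φ : H →ₗ[C] A) (h1 : φ 1 = 1) : PhiS α φ 1 = 1 := by
  rw [PhiS_apply α φ (reprOne C)]
  simp [reprOne, h1]
  rfl

lemma PhiS_mul {f : H →ₗ[C] A} (hf : f ∈ GLset α) (g k : H) :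
    PhiS α f (g * k) = PhiS α f g * PhiS α f k := by
  classical
  set rg := Rep.arbitrary C g
  set rk := Rep.arbitrary C k
  set RL : ∀ i : rg.ι, Rep C (rg.left i) := fun i => Rep.arbitrary C (rg.left i)
  set RR : ∀ i : rg.ι, Rep C (rg.right i) := fun i => Rep.arbitrary C (rg.right i)
  have base := Rep.sum_tmul_tmul_eq rg RL RR
  rw [smash_mul_def, PhiS_apply α f (reprMul rg rk), PhiS_apply α f rg, PhiS_apply α f rk]
  simp only [map_sum, LinearMap.sum_apply]
  calc ∑ p ∈ (reprMul rg rk).index, (f ((reprMul rg rk).left p) ⊗ₜ[C] (reprMul rg rk).right p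
          : A ⊗[C] H)
      = ∑ i ∈ rg.index, ∑ j ∈ rk.index,
          (f (rg.left i * rk.left j) ⊗ₜ[C] (rg.right i * rk.right j) : A ⊗[C] H) :=
        Finset.sum_product (s := rg.index) (t := rk.index)
          (f := fun p => (f (rg.left p.1 * rk.left p.2) ⊗ₜ[C] (rg.right p.1 * rk.right p.2)
            : A ⊗[C] H))
    _ = ∑ j ∈ rk.index, ∑ i ∈ rg.index, ∑ m ∈ (RL i).index,
          ((f ((RL i).left m) * α.act ((RL i).right m) (f (rk.left j))) ⊗ₜ[C]
            (rg.right i * rk.right j) : A ⊗[C] H) := by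
        rw [Finset.sum_comm]
        refine Finset.sum_congr rfl fun j _ => Finset.sum_congr rfl fun i _ => ?_
        rw [GL_cC hf (rg.left i) (rk.left j) (RL i), TensorProduct.sum_tmul]
    _ = ∑ j ∈ rk.index, ∑ i ∈ rg.index, ∑ n ∈ (RR i).index,
          ((f (rg.left i) * α.act ((RR i).left n) (f (rk.left j))) ⊗ₜ[C]
            ((RR i).right n * rk.right j) : A ⊗[C] H) := by
        refine Finset.sum_congr rfl fun j _ => ?_
        have h := congrArg ((TensorProduct.map
            ((LinearMap.mul' C A) ∘ₗ (TensorProduct.map f (aF α (f (rk.left j)))))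
            (LinearMap.mulRight C (rk.right j))) ∘ₗ
          (TensorProduct.assoc C H H H).symm.toLinearMap) base
        simpa only [map_sum, LinearMap.comp_apply, LinearEquiv.coe_coe,
          TensorProduct.assoc_symm_tmul, TensorProduct.map_tmul, LinearMap.mul'_apply,
          LinearMap.mulRight_apply, aF_apply] using h
    _ = ∑ j ∈ rk.index, ∑ i ∈ rg.index, smashMul α
          ((f (rg.left i) ⊗ₜ[C] rg.right i : A ⊗[C] H))
          ((f (rk.left j) ⊗ₜ[C] rk.right j : A ⊗[C] H)) := by
        exact Finset.sum_congr rfl fun j _ => Finset.sum_congr rfl fun i _ =>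
          (smashMul_tmul α _ _ _ _ (RR i)).symm
end SmashMaps

section SmashIdent

variable (α : StarAction C H A)

lemma iS_comp (f : H →ₗ[C] A) :
    iS α ∘ₗ f = cnv (PhiS α f) (rS α ∘ₗ HopfAlgebra.antipode C) := by
  apply LinearMap.ext; intro g
  classical
  set rg := Rep.arbitrary C g
  set RL : ∀ i : rg.ι, Rep C (rg.left i) := fun i => Rep.arbitrary C (rg.left i)
  set RR : ∀ i : rg.ι, Rep C (rg.right i) := fun i => Rep.arbitrary C (rg.right i)
  have base := Rep.sum_tmul_tmul_eq rg RL RR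
  rw [LinearMap.comp_apply, cnv_apply _ _ rg]
  refine Eq.symm ?_
  calc (∑ i ∈ rg.index, PhiS α f (rg.left i) *
        (rS α ∘ₗ HopfAlgebra.antipode (R := C)) (rg.right i) : A ⊗[C] H)
      = ∑ i ∈ rg.index, ∑ m ∈ (RL i).index,
          (f ((RL i).left m) ⊗ₜ[C] ((RL i).right m * HopfAlgebra.antipode (R := C) (rg.right i))
            : A ⊗[C] H) := by
        refine Finset.sum_congr rfl fun i _ => ?_
        rw [smash_mul_def, LinearMap.comp_apply, PhiS_apply α f (RL i), rS_apply, map_sum,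
          LinearMap.sum_apply]
        exact Finset.sum_congr rfl fun m _ => smash_tmul_mul_one α _ _ _
    _ = ∑ i ∈ rg.index, ∑ n ∈ (RR i).index,
          (f (rg.left i) ⊗ₜ[C] ((RR i).left n * HopfAlgebra.antipode (R := C) ((RR i).right n))
            : A ⊗[C] H) := by
        have h := congrArg (TensorProduct.map f
          ((LinearMap.mul' C H) ∘ₗ (LinearMap.lTensor H (HopfAlgebra.antipode (R := C))))) base
        simpa only [map_sum, TensorProduct.map_tmul, LinearMap.comp_apply,
          LinearMap.lTensor_tmul, LinearMap.mul'_apply] using h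
    _ = ∑ i ∈ rg.index,
          (Coalgebra.counit (R := C) (rg.right i)) • ((f (rg.left i) ⊗ₜ[C] (1 : H)) : A ⊗[C] H) := by
        refine Finset.sum_congr rfl fun i _ => ?_
        rw [← TensorProduct.tmul_sum, Rep.sum_mul_antipode_eq_smul (RR i),
          TensorProduct.tmul_smul]
    _ = (f g ⊗ₜ[C] (1 : H) : A ⊗[C] H) := by
        calc ∑ i ∈ rg.index, (Coalgebra.counit (R := C) (rg.right i)) •
              ((f (rg.left i) ⊗ₜ[C] (1 : H)) : A ⊗[C] H)
            = ∑ i ∈ rg.index, ((f (Coalgebra.counit (R := C) (rg.right i) • rg.left i)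
                ⊗ₜ[C] (1 : H)) : A ⊗[C] H) := by
              refine Finset.sum_congr rfl fun i _ => ?_
              rw [TensorProduct.smul_tmul', map_smul]
          _ = _ := by rw [← TensorProduct.sum_tmul, ← map_sum, counit_smul_left rg]
    _ = @id (A ⊗[C] H) (iS α (f g)) := rfl

lemma iS_comp_invf (f : H →ₗ[C] A) :
    iS α ∘ₗ invf α f = cnv (rS α) (PhiS α f ∘ₗ HopfAlgebra.antipode C) := by
  apply LinearMap.ext; intro g
  classical
  set rg := Rep.arbitrary C g
  set RL : ∀ i : rg.ι, Rep C (rg.left i) := fun i => Rep.arbitrary C (rg.left i)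
  set RR : ∀ i : rg.ι, Rep C (rg.right i) := fun i => Rep.arbitrary C (rg.right i)
  set RU : ∀ (i : rg.ι) (n : (RR i).ι), Rep C ((RR i).left n) :=
    fun i n => Rep.arbitrary C ((RR i).left n)
  set β : H →ₗ[C] H →ₗ[C] A := α.act.compl₂ (f ∘ₗ HopfAlgebra.antipode (R := C)) with hβdef
  set γ : H →ₗ[C] H →ₗ[C] H := (LinearMap.mul C H).compl₂ (HopfAlgebra.antipode (R := C))
    with hγdef
  have hβ : ∀ x y : H, β x y = α.act x (f (HopfAlgebra.antipode (R := C) y)) := fun x y => rfl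
  have hγ : ∀ x y : H, γ x y = x * HopfAlgebra.antipode (R := C) y := fun x y => rfl
  rw [LinearMap.comp_apply, cnv_apply _ _ rg]
  refine Eq.symm ?_
  calc (∑ i ∈ rg.index, rS α (rg.left i) *
        (PhiS α f ∘ₗ HopfAlgebra.antipode (R := C)) (rg.right i) : A ⊗[C] H)
      = ∑ i ∈ rg.index, ∑ m ∈ (RL i).index, ∑ n ∈ (RR i).index,
          ((β ((RL i).left m) ((RR i).right n)) ⊗ₜ[C] (γ ((RL i).right m) ((RR i).left n))
            : A ⊗[C] H) := by
        refine Finset.sum_congr rfl fun i _ => ?_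
        rw [smash_mul_def, LinearMap.comp_apply, PhiS_apply α f (reprAntipode (RR i)), rS_apply,
          map_sum]
        simp only [reprAntipode]
        calc ∑ n ∈ (RR i).index, smashMul α ((1 : A) ⊗ₜ[C] rg.left i)
              (f (HopfAlgebra.antipode (R := C) ((RR i).right n)) ⊗ₜ[C]
                HopfAlgebra.antipode (R := C) ((RR i).left n))
            = ∑ n ∈ (RR i).index, ∑ m ∈ (RL i).index,
                ((β ((RL i).left m) ((RR i).right n)) ⊗ₜ[C] (γ ((RL i).right m) ((RR i).left n))
                  : A ⊗[C] H) := by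
              refine Finset.sum_congr rfl fun n _ => ?_
              rw [smashMul_tmul α _ _ _ _ (RL i)]
              refine Finset.sum_congr rfl fun m _ => ?_
              rw [hβ, hγ, one_mul]
          _ = ∑ m ∈ (RL i).index, ∑ n ∈ (RR i).index,
                ((β ((RL i).left m) ((RR i).right n)) ⊗ₜ[C] (γ ((RL i).right m) ((RR i).left n))
                  : A ⊗[C] H) := Finset.sum_comm
    _ = ∑ i ∈ rg.index, ∑ n ∈ (RR i).index, ∑ p ∈ (RU i n).index,
          ((β (rg.left i) ((RR i).right n)) ⊗ₜ[C] (γ ((RU i n).left p) ((RU i n).right p))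
            : A ⊗[C] H) := four_leg β γ rg RL RR RU
    _ = ∑ i ∈ rg.index, ∑ n ∈ (RR i).index, (Coalgebra.counit (R := C) ((RR i).left n)) •
          ((α.act (rg.left i) (f (HopfAlgebra.antipode (R := C) ((RR i).right n)))
            ⊗ₜ[C] (1 : H)) : A ⊗[C] H) := by
        refine Finset.sum_congr rfl fun i _ => Finset.sum_congr rfl fun n _ => ?_
        rw [← TensorProduct.tmul_sum]
        rw [show ∑ p ∈ (RU i n).index, γ ((RU i n).left p) ((RU i n).right p)
            = Coalgebra.counit (R := C) ((RR i).left n) • (1 : H) from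
          Rep.sum_mul_antipode_eq_smul (RU i n)]
        rw [TensorProduct.tmul_smul, hβ]
    _ = ∑ i ∈ rg.index, (α.act (rg.left i) (f (HopfAlgebra.antipode (R := C) (rg.right i)))
          ⊗ₜ[C] (1 : H) : A ⊗[C] H) := by
        refine Finset.sum_congr rfl fun i _ => ?_
        calc ∑ n ∈ (RR i).index, (Coalgebra.counit (R := C) ((RR i).left n)) •
              ((α.act (rg.left i) (f (HopfAlgebra.antipode (R := C) ((RR i).right n)))
                ⊗ₜ[C] (1 : H)) : A ⊗[C] H)
            = ∑ n ∈ (RR i).index, ((α.act (rg.left i) (f (HopfAlgebra.antipode (R := C)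
                (Coalgebra.counit (R := C) ((RR i).left n) • (RR i).right n)))
                ⊗ₜ[C] (1 : H)) : A ⊗[C] H) := by
              refine Finset.sum_congr rfl fun n _ => ?_
              rw [TensorProduct.smul_tmul', map_smul, map_smul, map_smul]
          _ = _ := by
              rw [← TensorProduct.sum_tmul, ← map_sum, ← map_sum, ← map_sum,
                counit_smul_right (RR i)]
    _ = @id (A ⊗[C] H) (iS α (invf α f g)) := by
        rw [invf_apply α f rg, map_sum]
        exact Finset.sum_congr rfl fun i _ => rfl

end SmashIdent

section Final

variable {α : StarAction C H A}

lemma GL_inv {f : H →ₗ[C] A} (hf : f ∈ GLset α) :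
    cnv f (invf α f) = cuni ∧ cnv (invf α f) f = cuni := by
  have hP := cnv_antipode (PhiS α f) (PhiS_mul α hf) (PhiS_one α f hf.1)
  have hR := cnv_antipode (rS α) (rS_mul α) (rS_one α)
  have key1 : cnv (iS α ∘ₗ f) (iS α ∘ₗ invf α f) = cuni := by
    rw [iS_comp α f, iS_comp_invf α f]
    calc cnv (cnv (PhiS α f) (rS α ∘ₗ HopfAlgebra.antipode C))
          (cnv (rS α) (PhiS α f ∘ₗ HopfAlgebra.antipode C))
        = cnv (PhiS α f) (cnv (cnv (rS α ∘ₗ HopfAlgebra.antipode C) (rS α))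
            (PhiS α f ∘ₗ HopfAlgebra.antipode C)) := by
          rw [cnv_assoc, cnv_assoc]
      _ = cuni := by rw [hR.2, cnv_cuni_left, hP.1]
  have key2 : cnv (iS α ∘ₗ invf α f) (iS α ∘ₗ f) = cuni := by
    rw [iS_comp α f, iS_comp_invf α f]
    calc cnv (cnv (rS α) (PhiS α f ∘ₗ HopfAlgebra.antipode C))
          (cnv (PhiS α f) (rS α ∘ₗ HopfAlgebra.antipode C))
        = cnv (rS α) (cnv (cnv (PhiS α f ∘ₗ HopfAlgebra.antipode C) (PhiS α f))
            (rS α ∘ₗ HopfAlgebra.antipode C)) := by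
          rw [cnv_assoc, cnv_assoc]
      _ = cuni := by rw [hP.2, cnv_cuni_left, hR.1]
  constructor
  · apply iS_cancel α
    rw [cnv_comp (iS α) (iS_mul α), key1, cuni_comp (iS α) (iS_one α)]
  · apply iS_cancel α
    rw [cnv_comp (iS α) (iS_mul α), key2, cuni_comp (iS α) (iS_one α)]

lemma cuni_mem : (cuni : H →ₗ[C] A) ∈ GLset α := by
  refine ⟨?_, ?_, ?_⟩
  · rw [cuni_apply, Bialgebra.counit_one, one_smul]
  · intro g k n g1 g2 hsw
    set r : Rep C g := reprOfSw hsw with hr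
    have : ∑ i : Fin n, (cuni : H →ₗ[C] A) (g1 i) * α.act (g2 i) ((cuni : H →ₗ[C] A) k)
        = ∑ i ∈ r.index, (cuni : H →ₗ[C] A) (r.left i) * α.act (r.right i) ((cuni : H →ₗ[C] A) k) := by
      rw [hr]; rfl
    rw [this]
    refine Eq.symm ?_
    calc ∑ i ∈ r.index, (cuni : H →ₗ[C] A) (r.left i) * α.act (r.right i)
          ((cuni : H →ₗ[C] A) k)
        = ∑ i ∈ r.index, (Coalgebra.counit (R := C) (r.left i) *
            Coalgebra.counit (R := C) (r.right i)) • (Coalgebra.counit (R := C) k • (1 : A)) := by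
          refine Finset.sum_congr rfl fun i _ => ?_
          rw [cuni_apply, cuni_apply, map_smul, α.act_unit, smul_mul_assoc, one_mul,
            smul_smul, smul_smul, smul_smul]
          congr 1
          ring
      _ = Coalgebra.counit (R := C) g • (Coalgebra.counit (R := C) k • (1 : A)) := by
          rw [← Finset.sum_smul, counit_counit r]
      _ = (cuni : H →ₗ[C] A) (g * k) := by
          rw [cuni_apply, Bialgebra.counit_mul, mul_smul]
  · intro g b n g1 g2 hsw
    set r : Rep C g := reprOfSw hsw with hr
    have h1 : ∑ i : Fin n, α.act (g1 i) b * (cuni : H →ₗ[C] A) (g2 i)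
        = α.act g b := by
      have : ∑ i : Fin n, α.act (g1 i) b * (cuni : H →ₗ[C] A) (g2 i)
          = ∑ i ∈ r.index, α.act (r.left i) b * (cuni : H →ₗ[C] A) (r.right i) := by rw [hr]; rfl
      rw [this]
      calc ∑ i ∈ r.index, α.act (r.left i) b * (cuni : H →ₗ[C] A) (r.right i)
          = ∑ i ∈ r.index, α.act (Coalgebra.counit (R := C) (r.right i) • r.left i) b := by
            refine Finset.sum_congr rfl fun i _ => ?_
            rw [cuni_apply, mul_smul_comm, mul_one, map_smul, LinearMap.smul_apply]
        _ = α.act g b := by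
            rw [← LinearMap.sum_apply, ← map_sum, counit_smul_left r]
    have h2 : ∑ i : Fin n, (cuni : H →ₗ[C] A) (g1 i) * α.act (g2 i) b = α.act g b := by
      have : ∑ i : Fin n, (cuni : H →ₗ[C] A) (g1 i) * α.act (g2 i) b
          = ∑ i ∈ r.index, (cuni : H →ₗ[C] A) (r.left i) * α.act (r.right i) b := by rw [hr]; rfl
      rw [this]
      calc ∑ i ∈ r.index, (cuni : H →ₗ[C] A) (r.left i) * α.act (r.right i) b
          = ∑ i ∈ r.index, α.act (Coalgebra.counit (R := C) (r.left i) • r.right i) b := by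
            refine Finset.sum_congr rfl fun i _ => ?_
            rw [cuni_apply, smul_mul_assoc, one_mul, map_smul, LinearMap.smul_apply]
        _ = α.act g b := by
            rw [← LinearMap.sum_apply, ← map_sum, counit_smul_right r]
    rw [h1, h2]

lemma GL_mul {f h : H →ₗ[C] A} (hf : f ∈ GLset α) (hh : h ∈ GLset α) :
    cnv f h ∈ GLset α := by
  have hX : ∀ b : A, cnv (aF α b) (cnv f h) = cnv (cnv f h) (aF α b) := fun b => by
    calc cnv (aF α b) (cnv f h) = cnv (cnv (aF α b) f) h := (cnv_assoc _ _ _).symm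
      _ = cnv (cnv f (aF α b)) h := by rw [GL_cX_hom hf]
      _ = cnv f (cnv (aF α b) h) := cnv_assoc _ _ _
      _ = cnv f (cnv h (aF α b)) := by rw [GL_cX_hom hh]
      _ = cnv (cnv f h) (aF α b) := (cnv_assoc _ _ _).symm
  have hfact : Tmu (cnv f h) = cnv (F1 (cnv f h)) (F2 α (cnv f h)) := by
    rw [Tmu_cnv, GL_fact hf, GL_fact hh]
    calc cnv (cnv (F1 f) (F2 α f)) (cnv (F1 h) (F2 α h))
        = cnv (F1 f) (cnv (cnv (F2 α f) (F1 h)) (F2 α h)) := by rw [cnv_assoc, cnv_assoc]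
      _ = cnv (F1 f) (cnv (cnv (F1 h) (F2 α f)) (F2 α h)) := by
          rw [F2F1_swap (fun b => GL_cX_hom hh b)]
      _ = cnv (cnv (F1 f) (F1 h)) (cnv (F2 α f) (F2 α h)) := by
          rw [cnv_assoc, ← cnv_assoc (F1 f) (F1 h)]
      _ = cnv (F1 (cnv f h)) (F2 α (cnv f h)) := by rw [F1_cnv, F2_cnv]
  refine ⟨?_, ?_, ?_⟩
  · rw [cnv_apply _ _ (reprOne C)]
    simp [reprOne, hf.1, hh.1]
  · intro g k n g1 g2 hsw
    set r : Rep C g := reprOfSw hsw with hr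
    have h1 := LinearMap.congr_fun (LinearMap.congr_fun hfact g) k
    rw [Tmu_apply, F1F2_apply _ _ r k] at h1
    rw [h1, hr]; rfl
  · intro g b n g1 g2 hsw
    set r : Rep C g := reprOfSw hsw with hr
    have h1 := LinearMap.congr_fun (hX b) g
    rw [cnv_apply _ _ r, cnv_apply _ _ r] at h1
    simp only [aF_apply] at h1
    rw [show (∑ i : Fin n, α.act (g1 i) b * (cnv f h) (g2 i))
        = ∑ i ∈ r.index, α.act (r.left i) b * (cnv f h) (r.right i) from by rw [hr]; rfl]
    rw [show (∑ i : Fin n, (cnv f h) (g1 i) * α.act (g2 i) b)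
        = ∑ i ∈ r.index, (cnv f h) (r.left i) * α.act (r.right i) b from by rw [hr]; rfl]
    exact h1

lemma GL_inv_mem {f : H →ₗ[C] A} (hf : f ∈ GLset α) : invf α f ∈ GLset α := by
  obtain ⟨hfh, hhf⟩ := GL_inv hf
  have hX : ∀ b : A, cnv (aF α b) (invf α f) = cnv (invf α f) (aF α b) := fun b => by
    calc cnv (aF α b) (invf α f)
        = cnv (cnv (cnv (invf α f) f) (aF α b)) (invf α f) := by rw [hhf, cnv_cuni_left]
      _ = cnv (invf α f) (cnv (cnv f (aF α b)) (invf α f)) := by simp only [cnv_assoc]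
      _ = cnv (invf α f) (cnv (cnv (aF α b) f) (invf α f)) := by rw [GL_cX_hom hf b]
      _ = cnv (invf α f) (cnv (aF α b) (cnv f (invf α f))) := by rw [cnv_assoc]
      _ = cnv (invf α f) (aF α b) := by rw [hfh, cnv_cuni_right]
  have hTmu : Tmu (invf α f) = cnv (F2 α (invf α f)) (F1 (invf α f)) := by
    refine cnv_unique (φ := Tmu f) ?_ ?_
    · rw [← Tmu_cnv, hhf, Tmu_cuni]
    · rw [GL_fact hf]
      calc cnv (cnv (F1 f) (F2 α f)) (cnv (F2 α (invf α f)) (F1 (invf α f)))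
          = cnv (F1 f) (cnv (cnv (F2 α f) (F2 α (invf α f))) (F1 (invf α f))) := by
            rw [cnv_assoc, cnv_assoc]
        _ = cnv (F1 f) (cnv (F2 α (cnv f (invf α f))) (F1 (invf α f))) := by rw [F2_cnv]
        _ = cnv (F1 f) (F1 (invf α f)) := by rw [hfh, F2_cuni, cnv_cuni_left]
        _ = F1 (cnv f (invf α f)) := F1_cnv _ _
        _ = cuni := by rw [hfh, F1_cuni]
  refine ⟨?_, ?_, ?_⟩
  · rw [invf_apply α f (reprOne C)]
    simp [reprOne, antipode_one', α.act_one, hf.1]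
  · intro g k n g1 g2 hsw
    set r : Rep C g := reprOfSw hsw with hr
    have h1 := LinearMap.congr_fun (LinearMap.congr_fun hTmu g) k
    rw [Tmu_apply, F2F1_apply _ _ r k] at h1
    have h2 := LinearMap.congr_fun (hX (invf α f k)) g
    rw [cnv_apply _ _ r, cnv_apply _ _ r] at h2
    simp only [aF_apply] at h2
    rw [h1, h2, hr]; rfl
  · intro g b n g1 g2 hsw
    set r : Rep C g := reprOfSw hsw with hr
    have h1 := LinearMap.congr_fun (hX b) g
    rw [cnv_apply _ _ r, cnv_apply _ _ r] at h1
    simp only [aF_apply] at h1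
    rw [show (∑ i : Fin n, α.act (g1 i) b * (invf α f) (g2 i))
        = ∑ i ∈ r.index, α.act (r.left i) b * (invf α f) (r.right i) from by rw [hr]; rfl]
    rw [show (∑ i : Fin n, (invf α f) (g1 i) * α.act (g2 i) b)
        = ∑ i ∈ r.index, (invf α f) (r.left i) * α.act (r.right i) b from by rw [hr]; rfl]
    exact h1

end Final

end GLaux

open GLaux in
/-- `GL(H,A)` is a group under the convolution product, with unit `ê(g) = ε(g)1_A`. -/
theorem GL_group (hH : IsHopfStar C H) (α : StarAction C H A) :
    convUnit ∈ GLset α ∧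
    (∀ f ∈ GLset α, ∀ h ∈ GLset α, conv f h ∈ GLset α) ∧
    (∀ f h k : H →ₗ[C] A, conv (conv f h) k = conv f (conv h k)) ∧
    (∀ f ∈ GLset α, conv convUnit f = f ∧ conv f convUnit = f) ∧
    (∀ f ∈ GLset α, ∃ h ∈ GLset α, conv f h = convUnit ∧ conv h f = convUnit) := by
  refine ⟨?_, ?_, ?_, ?_, ?_⟩
  · rw [convUnit_eq_cuni]
    exact cuni_mem
  · intro f hf h hh
    rw [conv_eq_cnv]
    exact GL_mul hf hh
  · intro f h k
    rw [conv_eq_cnv, conv_eq_cnv, conv_eq_cnv, conv_eq_cnv]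
    exact cnv_assoc f h k
  · intro f hf
    rw [convUnit_eq_cuni, conv_eq_cnv, conv_eq_cnv]
    exact ⟨cnv_cuni_left f, cnv_cuni_right f⟩
  · intro f hf
    refine ⟨invf α f, GL_inv_mem hf, ?_, ?_⟩
    · rw [conv_eq_cnv, convUnit_eq_cuni]
      exact (GL_inv hf).1
    · rw [conv_eq_cnv, convUnit_eq_cuni]
      exact (GL_inv hf).2
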